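/- (Ballistic transport upper bound) Let H = A + V on ℓ²(ℤ) where (Au)_n = Σ_k a_{n-k}u_k with |a_n| ≤ A₁e^{-a|n|}, a_{-n} = conj(a_n), and V real bounded. Let φ be finitely supported. Then for every q > 0, the upper transport exponent β⁺_φ(q) ≤ 1. -/

import Mathlib

open scoped InnerProductSpace ENNReal
open MeasureTheory Filter

noncomputable section

abbrev L2 := lp (fun _ : ℤ => ℂ) 2

def dl (n : ℤ) : L2 := lp.single 2 n (1 : ℂ)

def U (H : L2 →L[ℂ] L2) (t : ℝ) : L2 →L[ℂ] L2 :=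
  NormedSpace.exp ((-(t : ℂ) * Complex.I) • H)

def IsLongRange (a : ℤ → ℂ) (V : ℤ → ℝ) (H : L2 →L[ℂ] L2) : Prop :=
  ∀ (u : L2) (n : ℤ), (H u) n = (∑' k : ℤ, a k * u (n - k)) + (V n : ℂ) * u n

/-- The time-averaged `q`-th moment `⟨|X|^q_φ⟩(T)`. -/
def moment (H : L2 →L[ℂ] L2) (φ : L2) (q T : ℝ) : ℝ :=
  (2 / T) * ∫ t in Set.Ioi (0 : ℝ),
    Real.exp (-2 * t / T) * ∑' n : ℤ, |(n : ℝ)| ^ q * ‖⟪U H t φ, dl n⟫_ℂ‖ ^ 2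

/-- The upper transport exponent `β⁺_φ(q)`. -/
def beta (H : L2 →L[ℂ] L2) (φ : L2) (q : ℝ) : EReal :=
  Filter.limsup
    (fun T : ℝ => ((Real.log (moment H φ q T) / (q * Real.log T) : ℝ) : EReal))
    Filter.atTop

private lemma aux_summable_nat_rpow_exp (q c : ℝ) (hq : 0 < q) (hc : 0 < c) :
    Summable (fun n : ℕ => (n : ℝ) ^ q * Real.exp (-c * n)) := by
  set N : ℕ := ⌈q⌉₊ with hN
  have hbase : Summable (fun n : ℕ => (n : ℝ) ^ N * Real.exp (-c) ^ n) := by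
    have : ‖Real.exp (-c)‖ < 1 := by
      rw [Real.norm_eq_abs, abs_of_pos (Real.exp_pos _)]
      exact Real.exp_lt_one_iff.mpr (by linarith)
    simpa using summable_pow_mul_geometric_of_norm_lt_one N this
  refine hbase.of_nonneg_of_le (fun n => ?_) (fun n => ?_)
  · positivity
  · have hexp : Real.exp (-c * n) = Real.exp (-c) ^ n := by
      rw [← Real.exp_nat_mul]; ring_nf
    rw [hexp]
    rcases Nat.eq_zero_or_pos n with h0 | h1
    · subst h0
      have : (0:ℝ) ≤ (0:ℝ)^N * Real.exp (-c) ^ 0 := by positivity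
      simpa [Real.zero_rpow hq.ne'] using this
    · have h1' : (1:ℝ) ≤ (n:ℝ) := by exact_mod_cast h1
      have : (n:ℝ) ^ q ≤ (n:ℝ) ^ (N:ℝ) :=
        Real.rpow_le_rpow_of_exponent_le h1' (Nat.le_ceil q)
      rw [Real.rpow_natCast] at this
      exact mul_le_mul_of_nonneg_right this (pow_nonneg (Real.exp_nonneg _) n)

private lemma aux_summable_int_rpow_exp (q c : ℝ) (hq : 0 < q) (hc : 0 < c) :
    Summable (fun k : ℤ => |(k : ℝ)| ^ q * Real.exp (-c * |(k : ℝ)|)) := by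
  rw [summable_int_iff_summable_nat_and_neg]
  constructor <;>
  · apply (aux_summable_nat_rpow_exp q c hq hc).congr
    intro n
    simp [abs_of_nonneg, Nat.cast_nonneg]

private lemma aux_summable_int_exp (c : ℝ) (hc : 0 < c) :
    Summable (fun k : ℤ => Real.exp (-c * |(k : ℝ)|)) := by
  rw [summable_int_iff_summable_nat_and_neg]
  have : Summable (fun n : ℕ => Real.exp (-c * n)) := by
    have : Summable (fun n : ℕ => Real.exp (-c) ^ n) :=
      summable_geometric_of_lt_one (Real.exp_nonneg _)
        (Real.exp_lt_one_iff.mpr (by linarith))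
    refine this.congr fun n => ?_
    rw [← Real.exp_nat_mul]; ring_nf
  constructor <;>
  · apply this.congr
    intro n
    simp [abs_of_nonneg, Nat.cast_nonneg]

private lemma dl_apply (n j : ℤ) : (dl n) j = if j = n then 1 else 0 := by
  simp [dl, lp.single_apply, Pi.single_apply]

private lemma aux_ker_summable {a : ℤ → ℂ} {A₁ α : ℝ} (hA₁ : 0 < A₁) (hα : 0 < α)
    (ha : ∀ k : ℤ, ‖a k‖ ≤ A₁ * Real.exp (-α * |(k : ℝ)|))
    (u : L2) (n : ℤ) : Summable (fun k : ℤ => ‖a k * u (n - k)‖) := by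
  refine ((aux_summable_int_exp α hα).mul_right (A₁ * ‖u‖)).of_nonneg_of_le
    (fun k => norm_nonneg _) (fun k => ?_)
  rw [norm_mul]
  calc ‖a k‖ * ‖u (n - k)‖ ≤ (A₁ * Real.exp (-α * |(k:ℝ)|)) * ‖u‖ := by
        apply mul_le_mul (ha k) (lp.norm_apply_le_norm (by norm_num) u (n-k))
          (norm_nonneg _) (by positivity)
    _ = Real.exp (-α * |(k:ℝ)|) * (A₁ * ‖u‖) := by ring

private lemma aux_ker_summable' {a : ℤ → ℂ} {A₁ α : ℝ} (hA₁ : 0 < A₁) (hα : 0 < α)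
    (ha : ∀ k : ℤ, ‖a k‖ ≤ A₁ * Real.exp (-α * |(k : ℝ)|))
    (u : L2) (n : ℤ) : Summable (fun m : ℤ => (starRingEnd ℂ) (u m) * a (m - n)) := by
  apply Summable.of_norm
  have hbase : Summable (fun m : ℤ => Real.exp (-α * |((m - n : ℤ) : ℝ)|)) := by
    exact ((Equiv.subRight n).summable_iff
      (f := fun k : ℤ => Real.exp (-α * |(k : ℝ)|))).mpr (aux_summable_int_exp α hα)
  refine (hbase.mul_right (A₁ * ‖u‖)).of_nonneg_of_le (fun m => norm_nonneg _) (fun m => ?_)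
  rw [norm_mul, Complex.norm_conj]
  calc ‖u m‖ * ‖a (m - n)‖ ≤ ‖u‖ * (A₁ * Real.exp (-α * |((m - n : ℤ):ℝ)|)) := by
        apply mul_le_mul (lp.norm_apply_le_norm (by norm_num) u m) (ha (m-n))
          (norm_nonneg _) (norm_nonneg _)
    _ = Real.exp (-α * |((m - n : ℤ):ℝ)|) * (A₁ * ‖u‖) := by ring

private lemma aux_key {a : ℤ → ℂ} {V : ℤ → ℝ} {H : L2 →L[ℂ] L2} {A₁ α : ℝ}
    (hA₁ : 0 < A₁) (hα : 0 < α)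
    (ha : ∀ k : ℤ, ‖a k‖ ≤ A₁ * Real.exp (-α * |(k : ℝ)|))
    (hsym : ∀ k : ℤ, a (-k) = starRingEnd ℂ (a k))
    (hH : IsLongRange a V H)
    (u : L2) (n : ℤ) : ⟪H u, dl n⟫_ℂ = ⟪u, H (dl n)⟫_ℂ := by
  have hHdl : ∀ m : ℤ, (H (dl n)) m = a (m - n) + (if m = n then (V n : ℂ) else 0) := by
    intro m
    rw [hH (dl n) m]
    congr 1
    · rw [show (∑' k : ℤ, a k * (dl n) (m - k)) = ∑' k : ℤ, (if k = m - n then a (m - n) else 0) from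
        tsum_congr fun k => by
          rw [dl_apply]
          split_ifs with h1 h2 h2 <;> simp_all <;> omega]
      exact tsum_ite_eq (m - n) (fun _ => a (m - n))
    · rw [dl_apply]
      split_ifs with h <;> simp [h]
  have hL : ⟪H u, dl n⟫_ℂ = starRingEnd ℂ ((H u) n) := by
    rw [dl, lp.inner_single_right]
    simp [RCLike.inner_apply]
  have hconj : starRingEnd ℂ (∑' k : ℤ, a k * u (n - k))
      = ∑' k : ℤ, starRingEnd ℂ (a k) * starRingEnd ℂ (u (n - k)) := by
    have hs := (aux_ker_summable hA₁ hα ha u n).of_norm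
    rw [← (hs.hasSum.map (starRingEnd ℂ) (Complex.continuous_conj)).tsum_eq]
    exact tsum_congr fun k => by simp [Function.comp]
  have hre : (∑' k : ℤ, starRingEnd ℂ (a k) * starRingEnd ℂ (u (n - k)))
      = ∑' m : ℤ, a (m - n) * starRingEnd ℂ (u m) := by
    rw [← (Equiv.subLeft n).tsum_eq (fun m => a (m - n) * starRingEnd ℂ (u m))]
    refine tsum_congr fun k => ?_
    simp only [Equiv.subLeft_apply]
    rw [show n - k - n = -k by ring, hsym k]
  have hR : ⟪u, H (dl n)⟫_ℂ
      = (∑' m : ℤ, starRingEnd ℂ (u m) * a (m - n)) + starRingEnd ℂ (u n) * (V n : ℂ) := by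
    rw [lp.inner_eq_tsum]
    simp only [RCLike.inner_apply', hHdl, mul_add]
    rw [Summable.tsum_add (aux_ker_summable' hA₁ hα ha u n)]
    · congr 1
      rw [show (∑' m : ℤ, starRingEnd ℂ (u m) * (if m = n then (V n:ℂ) else 0))
          = ∑' m : ℤ, (if m = n then starRingEnd ℂ (u n) * (V n:ℂ) else 0) from
        tsum_congr fun m => by split_ifs with h <;> simp [h]]
      exact tsum_ite_eq n _
    · apply Summable.congr ((hasSum_ite_eq n (starRingEnd ℂ (u n) * (V n:ℂ))).summable)
      intro m
      split_ifs with h <;> simp [h]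
  rw [hL, hR, hH u n]
  rw [map_add, hconj, hre, map_mul]
  congr 1
  · exact tsum_congr fun m => by ring
  · simp [Complex.conj_ofReal]; ring

private lemma aux_sa {a : ℤ → ℂ} {V : ℤ → ℝ} {H : L2 →L[ℂ] L2} {A₁ α : ℝ}
    (hA₁ : 0 < A₁) (hα : 0 < α)
    (ha : ∀ k : ℤ, ‖a k‖ ≤ A₁ * Real.exp (-α * |(k : ℝ)|))
    (hsym : ∀ k : ℤ, a (-k) = starRingEnd ℂ (a k))
    (hH : IsLongRange a V H) : IsSelfAdjoint H := by
  rw [ContinuousLinearMap.isSelfAdjoint_iff_isSymmetric]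
  intro u v
  have hv : HasSum (fun n : ℤ => lp.single 2 n (v n)) v := lp.hasSum_single ENNReal.ofNat_ne_top v
  have h1 : HasSum (fun n : ℤ => ⟪H u, lp.single 2 n (v n)⟫_ℂ) ⟪H u, v⟫_ℂ := by
    simpa using hv.mapL (innerSL ℂ (H u))
  have h2 : HasSum (fun n : ℤ => ⟪u, H (lp.single 2 n (v n))⟫_ℂ) ⟪u, H v⟫_ℂ := by
    simpa using hv.mapL ((innerSL ℂ u).comp H)
  refine h1.unique ?_
  refine HasSum.congr_fun h2 fun n => ?_
  have hsingle : lp.single 2 n (v n) = v n • dl n := by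
    rw [dl, ← lp.single_smul, smul_eq_mul, mul_one]
  rw [hsingle, inner_smul_right, _root_.map_smul, inner_smul_right,
    aux_key hA₁ hα ha hsym hH u n]

private lemma aux_unitary {H : L2 →L[ℂ] L2} (hsa : IsSelfAdjoint H) (t : ℝ) (φ : L2) :
    ‖U H t φ‖ = ‖φ‖ := by
  set B : L2 →L[ℂ] L2 := (-(t : ℂ) * Complex.I) • H with hB
  have hstarB : star B = -B := by
    rw [hB, star_smul, hsa.star_eq]
    rw [← neg_smul]
    congr 1
    simp [Complex.ext_iff]
  have hmul : star (U H t) * U H t = 1 := by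
    rw [show U H t = NormedSpace.exp B from rfl, NormedSpace.star_exp, hstarB,
      ← NormedSpace.exp_add_of_commute_of_mem_ball (𝕂 := ℂ) (Commute.neg_left (Commute.refl B))
        ((NormedSpace.expSeries_radius_eq_top ℂ (L2 →L[ℂ] L2)).symm ▸ edist_lt_top _ _)
        ((NormedSpace.expSeries_radius_eq_top ℂ (L2 →L[ℂ] L2)).symm ▸ edist_lt_top _ _), neg_add_cancel,
      NormedSpace.exp_zero]
  have hinner : ⟪U H t φ, U H t φ⟫_ℂ = ⟪φ, φ⟫_ℂ := by
    have := ContinuousLinearMap.adjoint_inner_left (U H t) φ (U H t φ)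
    rw [← ContinuousLinearMap.star_eq_adjoint] at this
    rw [← this]
    rw [show (star (U H t)) ((U H t) φ) = (star (U H t) * U H t) φ from rfl, hmul]
    simp
  have h1 := inner_self_eq_norm_sq (𝕜 := ℂ) (U H t φ)
  have h2 := inner_self_eq_norm_sq (𝕜 := ℂ) φ
  have : ‖U H t φ‖ ^ 2 = ‖φ‖ ^ 2 := by rw [← h1, ← h2, hinner]
  rw [← Real.sqrt_sq (norm_nonneg (U H t φ)), ← Real.sqrt_sq (norm_nonneg φ), this]

section dec
variable {a : ℤ → ℂ} {V : ℤ → ℝ} {H : L2 →L[ℂ] L2} {A₁ α Vbd : ℝ}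
  (hA₁ : 0 < A₁) (hα : 0 < α) (hVbd : 0 ≤ Vbd)
  (ha : ∀ k : ℤ, ‖a k‖ ≤ A₁ * Real.exp (-α * |(k : ℝ)|))
  (hV : ∀ n : ℤ, |V n| ≤ Vbd)
  (hH : IsLongRange a V H)

-- one application of H preserves exponential decay at rate α/2
include hA₁ hα hVbd ha hV hH in
private lemma aux_step (ψ : L2) (C : ℝ) (hC : 0 ≤ C)
    (hψ : ∀ n : ℤ, ‖ψ n‖ ≤ C * Real.exp (-(α/2) * |(n : ℝ)|)) (n : ℤ) :
    ‖(H ψ) n‖ ≤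
      (A₁ * (∑' k : ℤ, Real.exp (-(α/2) * |(k : ℝ)|)) + Vbd) * C
        * Real.exp (-(α/2) * |(n : ℝ)|) := by
  set lam := α/2 with hlam
  have hlam0 : 0 < lam := by positivity
  set S := ∑' k : ℤ, Real.exp (-lam * |(k : ℝ)|) with hS
  rw [show ‖(H ψ) n‖ = ‖(H ψ) n‖ from rfl, hH ψ n]
  have hsum1 : Summable (fun k : ℤ => ‖a k * ψ (n - k)‖) := aux_ker_summable hA₁ hα ha ψ n
  have hbound : ∀ k : ℤ, ‖a k * ψ (n - k)‖ ≤
      Real.exp (-lam * |(k : ℝ)|) * (A₁ * C * Real.exp (-lam * |(n : ℝ)|)) := by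
    intro k
    rw [norm_mul]
    have h1 : ‖a k‖ ≤ A₁ * Real.exp (-α * |(k:ℝ)|) := ha k
    have h2 : ‖ψ (n - k)‖ ≤ C * Real.exp (-lam * |((n - k : ℤ) : ℝ)|) := hψ (n - k)
    have h3 : ‖a k‖ * ‖ψ (n - k)‖ ≤
        (A₁ * Real.exp (-α * |(k:ℝ)|)) * (C * Real.exp (-lam * |((n - k : ℤ) : ℝ)|)) :=
      mul_le_mul h1 h2 (norm_nonneg _) (by positivity)
    refine h3.trans ?_
    have habs : |(n : ℝ)| ≤ |(k : ℝ)| + |((n - k : ℤ) : ℝ)| := by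
      push_cast
      calc |(n:ℝ)| = |(k:ℝ) + ((n:ℝ) - k)| := by ring_nf
        _ ≤ |(k:ℝ)| + |(n:ℝ) - k| := abs_add_le _ _
    have hexp : Real.exp (-α * |(k:ℝ)|) * Real.exp (-lam * |((n - k : ℤ) : ℝ)|) ≤
        Real.exp (-lam * |(k:ℝ)|) * Real.exp (-lam * |(n : ℝ)|) := by
      rw [← Real.exp_add, ← Real.exp_add]
      apply Real.exp_le_exp.mpr
      have : lam * |(n:ℝ)| ≤ lam * (|(k:ℝ)| + |((n - k : ℤ) : ℝ)|) :=
        mul_le_mul_of_nonneg_left habs hlam0.le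
      nlinarith [abs_nonneg ((k:ℝ)), hlam0.le]
    nlinarith [Real.exp_nonneg (-α * |(k:ℝ)|), Real.exp_nonneg (-lam * |((n-k:ℤ):ℝ)|),
      Real.exp_nonneg (-lam * |(k:ℝ)|), Real.exp_nonneg (-lam * |(n:ℝ)|), hexp,
      mul_le_mul_of_nonneg_left hexp (mul_nonneg hA₁.le hC)]
  calc ‖(∑' k : ℤ, a k * ψ (n - k)) + (V n : ℂ) * ψ n‖
      ≤ ‖(∑' k : ℤ, a k * ψ (n - k))‖ + ‖(V n : ℂ) * ψ n‖ := norm_add_le _ _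
    _ ≤ S * (A₁ * C * Real.exp (-lam * |(n : ℝ)|)) + Vbd * (C * Real.exp (-lam * |(n : ℝ)|)) := by
        gcongr
        · calc ‖(∑' k : ℤ, a k * ψ (n - k))‖ ≤ ∑' k : ℤ, ‖a k * ψ (n - k)‖ :=
              norm_tsum_le_tsum_norm hsum1
            _ ≤ ∑' k : ℤ, Real.exp (-lam * |(k : ℝ)|) * (A₁ * C * Real.exp (-lam * |(n : ℝ)|)) :=
              Summable.tsum_le_tsum hbound hsum1 ((aux_summable_int_exp lam hlam0).mul_right _)
            _ = S * (A₁ * C * Real.exp (-lam * |(n : ℝ)|)) := tsum_mul_right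
        · rw [norm_mul]
          have : ‖((V n : ℝ) : ℂ)‖ ≤ Vbd := by
            rw [Complex.norm_real, Real.norm_eq_abs]; exact hV n
          exact mul_le_mul this (hψ n) (norm_nonneg _) hVbd
    _ = (A₁ * S + Vbd) * C * Real.exp (-lam * |(n : ℝ)|) := by ring

include hA₁ hα hVbd ha hV hH in
private lemma aux_pow (φ : L2) (C : ℝ) (hC : 0 ≤ C)
    (hφd : ∀ n : ℤ, ‖φ n‖ ≤ C * Real.exp (-(α/2) * |(n : ℝ)|)) (m : ℕ) (n : ℤ) :
    ‖((H ^ m) φ) n‖ ≤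
      C * (A₁ * (∑' k : ℤ, Real.exp (-(α/2) * |(k : ℝ)|)) + Vbd) ^ m
        * Real.exp (-(α/2) * |(n : ℝ)|) := by
  set M := A₁ * (∑' k : ℤ, Real.exp (-(α/2) * |(k : ℝ)|)) + Vbd with hM
  have hM0 : 0 ≤ M := by
    have : 0 ≤ ∑' k : ℤ, Real.exp (-(α/2) * |(k : ℝ)|) :=
      tsum_nonneg fun k => Real.exp_nonneg _
    positivity
  induction m generalizing n with
  | zero => simpa using hφd n
  | succ m ih =>
    have hprev : ∀ j : ℤ, ‖((H ^ m) φ) j‖ ≤ (C * M ^ m) * Real.exp (-(α/2) * |(j : ℝ)|) := by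
      intro j; simpa [mul_assoc] using ih j
    have := aux_step hA₁ hα hVbd ha hV hH ((H ^ m) φ) (C * M ^ m) (by positivity) hprev n
    rw [show (H ^ (m+1)) φ = H ((H ^ m) φ) by rw [pow_succ']; rfl]
    calc ‖(H ((H ^ m) φ)) n‖ ≤ M * (C * M ^ m) * Real.exp (-(α/2) * |(n : ℝ)|) := this
      _ = C * M ^ (m+1) * Real.exp (-(α/2) * |(n : ℝ)|) := by ring

end dec

-- coordinate of exp via series
private lemma aux_coord (H : L2 →L[ℂ] L2) (t : ℝ) (φ : L2) (n : ℤ) :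
    HasSum (fun m : ℕ => ((m.factorial : ℂ)⁻¹ * (-(t:ℂ) * Complex.I) ^ m) * (((H ^ m) φ) n))
      ((U H t φ) n) := by
  set B : L2 →L[ℂ] L2 := (-(t : ℂ) * Complex.I) • H with hB
  have hsum : HasSum (fun m : ℕ => ((m.factorial : ℂ)⁻¹) • B ^ m) (NormedSpace.exp B) := by
    rw [NormedSpace.exp_eq_tsum ℂ]
    exact (NormedSpace.expSeries_summable' (𝕂 := ℂ) B).hasSum
  set F : (L2 →L[ℂ] L2) →L[ℂ] ℂ :=
    (innerSL ℂ (dl n)).comp ((ContinuousLinearMap.apply ℂ L2) φ) with hF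
  have hFx : ∀ x : L2 →L[ℂ] L2, F x = (x φ) n := by
    intro x
    simp [hF, dl, lp.inner_single_left]
  have := hsum.mapL F
  rw [hFx] at this
  refine HasSum.congr_fun this fun m => ?_
  rw [hFx]
  rw [show B ^ m = ((-(t:ℂ) * Complex.I) ^ m) • H ^ m from smul_pow _ _ m]
  simp [mul_assoc]

private lemma aux_CT {H : L2 →L[ℂ] L2} {φ : L2} {C M lam : ℝ}
    (hC : 0 ≤ C) (hM : 0 ≤ M) (hlam : 0 < lam)
    (hpow : ∀ (m : ℕ) (n : ℤ), ‖((H ^ m) φ) n‖ ≤ C * M ^ m * Real.exp (-lam * |(n : ℝ)|))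
    (t : ℝ) (ht : 0 ≤ t) (n : ℤ) :
    ‖(U H t φ) n‖ ≤ C * Real.exp (M * t) * Real.exp (-lam * |(n : ℝ)|) := by
  have hhs := aux_coord H t φ n
  have hgs : Summable (fun m : ℕ => (t * M) ^ m / m.factorial * (C * Real.exp (-lam * |(n : ℝ)|))) :=
    (Real.summable_pow_div_factorial (t * M)).mul_right _
  have hbound : ∀ m : ℕ, ‖((m.factorial : ℂ)⁻¹ * (-(t:ℂ) * Complex.I) ^ m) * (((H ^ m) φ) n)‖ ≤
      (t * M) ^ m / m.factorial * (C * Real.exp (-lam * |(n : ℝ)|)) := by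
    intro m
    rw [norm_mul, norm_mul, norm_pow, norm_mul]
    have h1 : ‖((m.factorial : ℂ))⁻¹‖ = ((m.factorial : ℝ))⁻¹ := by
      rw [norm_inv, Complex.norm_natCast]
    have h2 : ‖(-(t:ℂ))‖ = t := by
      rw [norm_neg, Complex.norm_real]; exact abs_of_nonneg ht
    rw [h1, h2, Complex.norm_I, mul_one]
    calc ((m.factorial : ℝ))⁻¹ * t ^ m * ‖(((H ^ m) φ) n)‖
        ≤ ((m.factorial : ℝ))⁻¹ * t ^ m * (C * M ^ m * Real.exp (-lam * |(n : ℝ)|)) :=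
          mul_le_mul_of_nonneg_left (hpow m n) (by positivity)
      _ = (t * M) ^ m / m.factorial * (C * Real.exp (-lam * |(n : ℝ)|)) := by
          rw [mul_pow]; ring
  have hns : Summable (fun m : ℕ => ‖((m.factorial : ℂ)⁻¹ * (-(t:ℂ) * Complex.I) ^ m) * (((H ^ m) φ) n)‖) :=
    hgs.of_nonneg_of_le (fun m => norm_nonneg _) hbound
  calc ‖(U H t φ) n‖ = ‖(U H t φ) n‖ := rfl
    _ ≤ ∑' m : ℕ, ‖((m.factorial : ℂ)⁻¹ * (-(t:ℂ) * Complex.I) ^ m) * (((H ^ m) φ) n)‖ := by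
        rw [← hhs.tsum_eq]
        exact norm_tsum_le_tsum_norm hns
    _ ≤ ∑' m : ℕ, (t * M) ^ m / m.factorial * (C * Real.exp (-lam * |(n : ℝ)|)) :=
        Summable.tsum_le_tsum hbound hns hgs
    _ = (∑' m : ℕ, (t * M) ^ m / m.factorial) * (C * Real.exp (-lam * |(n : ℝ)|)) := tsum_mul_right
    _ = C * Real.exp (M * t) * Real.exp (-lam * |(n : ℝ)|) := by
        rw [show (∑' m : ℕ, (t * M) ^ m / m.factorial) = Real.exp (t * M) by
          rw [Real.exp_eq_exp_ℝ, NormedSpace.exp_eq_tsum_div]]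
        rw [mul_comm t M]; ring

private lemma aux_inner_dl (f : L2) (n : ℤ) : ‖⟪f, dl n⟫_ℂ‖ = ‖f n‖ := by
  rw [dl, lp.inner_single_right]
  simp [RCLike.inner_apply]

private lemma aux_sq_summable (f : L2) : Summable (fun n : ℤ => ‖f n‖ ^ 2) := by
  have hm : Memℓp (f : ∀ _ : ℤ, ℂ) 2 := lp.memℓp f
  have := hm.summable (p := 2) (by norm_num)
  refine this.congr fun n => ?_
  norm_num

private lemma aux_norm_sq (f : L2) : ∑' n : ℤ, ‖f n‖ ^ 2 = ‖f‖ ^ 2 := by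
  have h := lp.norm_rpow_eq_tsum (p := 2) (by norm_num) f
  have h2 : (2 : ℝ≥0∞).toReal = (2 : ℝ) := by norm_num
  rw [h2] at h
  rw [show (∑' n : ℤ, ‖f n‖ ^ 2) = ∑' n : ℤ, ‖f n‖ ^ (2:ℝ) from
    tsum_congr fun n => by norm_num [Real.rpow_natCast], ← h]
  norm_num [Real.rpow_natCast]

private lemma aux_sum_bound {q lam C₀ M : ℝ} (hq : 0 < q) (hlam : 0 < lam)
    (hC₀ : 0 ≤ C₀) (hM : 0 ≤ M) (ψ : L2) (t : ℝ) (ht : 0 ≤ t)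
    (hCT : ∀ n : ℤ, ‖ψ n‖ ≤ C₀ * Real.exp (M * t) * Real.exp (-lam * |(n : ℝ)|)) :
    ∑' n : ℤ, |(n : ℝ)| ^ q * ‖ψ n‖ ^ 2 ≤
      (2 * M * t / lam + 1) ^ q * ‖ψ‖ ^ 2
        + C₀ ^ 2 * ∑' n : ℤ, |(n : ℝ)| ^ q * Real.exp (-lam * |(n : ℝ)|) := by
  set R := 2 * M * t / lam with hR
  have hR0 : 0 ≤ R := by positivity
  set g : ℤ → ℝ := fun n => (R + 1) ^ q * ‖ψ n‖ ^ 2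
      + C₀ ^ 2 * (|(n : ℝ)| ^ q * Real.exp (-lam * |(n : ℝ)|)) with hg
  have hgsummable : Summable g :=
    ((aux_sq_summable ψ).mul_left _).add ((aux_summable_int_rpow_exp q lam hq hlam).mul_left _)
  have hpoint : ∀ n : ℤ, |(n : ℝ)| ^ q * ‖ψ n‖ ^ 2 ≤ g n := by
    intro n
    rcases le_or_gt (|(n : ℝ)|) (R + 1) with hn | hn
    · have h1 : |(n : ℝ)| ^ q ≤ (R + 1) ^ q := Real.rpow_le_rpow (abs_nonneg _) hn hq.le
      have : |(n : ℝ)| ^ q * ‖ψ n‖ ^ 2 ≤ (R + 1) ^ q * ‖ψ n‖ ^ 2 :=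
        mul_le_mul_of_nonneg_right h1 (by positivity)
      refine this.trans ?_
      simp only [hg]
      have : (0:ℝ) ≤ C₀ ^ 2 * (|(n : ℝ)| ^ q * Real.exp (-lam * |(n : ℝ)|)) := by positivity
      linarith
    · have hsq : ‖ψ n‖ ^ 2 ≤ C₀ ^ 2 * Real.exp (-lam * |(n : ℝ)|) := by
        have h1 := hCT n
        have h2 : ‖ψ n‖ ^ 2 ≤ (C₀ * Real.exp (M * t) * Real.exp (-lam * |(n : ℝ)|)) ^ 2 := by
          apply pow_le_pow_left₀ (norm_nonneg _) h1
        refine h2.trans ?_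
        have hkey : Real.exp (M * t) ^ 2 * Real.exp (-lam * |(n : ℝ)|) ^ 2 ≤
            Real.exp (-lam * |(n : ℝ)|) := by
          rw [← Real.exp_nat_mul, ← Real.exp_nat_mul, ← Real.exp_add]
          apply Real.exp_le_exp.mpr
          have h3 : 2 * M * t ≤ lam * |(n : ℝ)| := by
            have : R + 1 ≤ |(n : ℝ)| := hn.le
            have h4 : lam * R ≤ lam * (|(n : ℝ)| - 1) := by
              apply mul_le_mul_of_nonneg_left (by linarith) hlam.le
            have h5 : lam * R = 2 * M * t := by
              rw [hR]; field_simp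
            nlinarith
          push_cast
          nlinarith [abs_nonneg ((n:ℝ)), hlam.le]
        calc (C₀ * Real.exp (M * t) * Real.exp (-lam * |(n : ℝ)|)) ^ 2
            = C₀ ^ 2 * (Real.exp (M * t) ^ 2 * Real.exp (-lam * |(n : ℝ)|) ^ 2) := by ring
          _ ≤ C₀ ^ 2 * Real.exp (-lam * |(n : ℝ)|) := by
              apply mul_le_mul_of_nonneg_left hkey (by positivity)
      have : |(n : ℝ)| ^ q * ‖ψ n‖ ^ 2 ≤ |(n : ℝ)| ^ q * (C₀ ^ 2 * Real.exp (-lam * |(n : ℝ)|)) :=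
        mul_le_mul_of_nonneg_left hsq (by positivity)
      refine this.trans ?_
      simp only [hg]
      have h0 : (0:ℝ) ≤ (R + 1) ^ q * ‖ψ n‖ ^ 2 := by positivity
      nlinarith
  have hlsummable : Summable (fun n : ℤ => |(n : ℝ)| ^ q * ‖ψ n‖ ^ 2) :=
    hgsummable.of_nonneg_of_le (fun n => by positivity) hpoint
  calc ∑' n : ℤ, |(n : ℝ)| ^ q * ‖ψ n‖ ^ 2 ≤ ∑' n : ℤ, g n :=
      Summable.tsum_le_tsum hpoint hlsummable hgsummable
    _ = (R + 1) ^ q * ‖ψ‖ ^ 2 + C₀ ^ 2 * ∑' n : ℤ, |(n : ℝ)| ^ q * Real.exp (-lam * |(n : ℝ)|) := by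
      rw [hg, Summable.tsum_add ((aux_sq_summable ψ).mul_left _)
        ((aux_summable_int_rpow_exp q lam hq hlam).mul_left _), tsum_mul_left, tsum_mul_left,
        aux_norm_sq]

private lemma aux_pow_exp_bound (q : ℝ) (hq : 0 < q) (x : ℝ) (hx : 0 ≤ x) :
    (1 + x) ^ q * Real.exp (-x) ≤ 2 ^ (⌈q⌉₊) * (1 + (⌈q⌉₊).factorial) := by
  set N := ⌈q⌉₊ with hN
  have h1x : (1:ℝ) ≤ 1 + x := by linarith
  have h1 : (1 + x) ^ q ≤ (1 + x) ^ (N:ℝ) :=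
    Real.rpow_le_rpow_of_exponent_le h1x (Nat.le_ceil q)
  rw [Real.rpow_natCast] at h1
  have h2 : (1 + x) ^ N ≤ 2 ^ N * (1 + x ^ N) := by
    rcases le_total x 1 with h | h
    · have : (1 + x) ^ N ≤ 2 ^ N := pow_le_pow_left₀ (by linarith) (by linarith) N
      nlinarith [pow_nonneg hx N, pow_pos (show (0:ℝ) < 2 by norm_num) N]
    · have : (1 + x) ^ N ≤ (2 * x) ^ N := pow_le_pow_left₀ (by linarith) (by linarith) N
      rw [mul_pow] at this
      nlinarith [pow_pos (show (0:ℝ) < 2 by norm_num) N]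
  have h3 : x ^ N * Real.exp (-x) ≤ (N.factorial : ℝ) := by
    have hle : x ^ N / (N.factorial : ℝ) ≤ Real.exp x := by
      calc x ^ N / (N.factorial : ℝ)
          ≤ ∑ i ∈ Finset.range (N + 1), x ^ i / (i.factorial : ℝ) := by
            refine Finset.single_le_sum (f := fun i => x ^ i / (i.factorial : ℝ))
              (fun i _ => by positivity) (Finset.self_mem_range_succ N)
        _ ≤ Real.exp x := Real.sum_le_exp_of_nonneg hx _
    have hfact : (0:ℝ) < (N.factorial : ℝ) := by positivity
    rw [Real.exp_neg]
    rw [div_le_iff₀ hfact] at hle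
    calc x ^ N * (Real.exp x)⁻¹ ≤ (Real.exp x * (N.factorial : ℝ)) * (Real.exp x)⁻¹ :=
          mul_le_mul_of_nonneg_right hle (inv_nonneg.mpr (Real.exp_pos x).le)
      _ = (N.factorial : ℝ) := by field_simp
  have hexp1 : Real.exp (-x) ≤ 1 := Real.exp_le_one_iff.mpr (by linarith)
  have hexp0 : 0 ≤ Real.exp (-x) := (Real.exp_pos _).le
  calc (1 + x) ^ q * Real.exp (-x) ≤ (2 ^ N * (1 + x ^ N)) * Real.exp (-x) := by
        apply mul_le_mul_of_nonneg_right (h1.trans h2) hexp0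
    _ = 2 ^ N * (Real.exp (-x) + x ^ N * Real.exp (-x)) := by ring
    _ ≤ 2 ^ N * (1 + (N.factorial : ℝ)) := by
        apply mul_le_mul_of_nonneg_left (by linarith) (by positivity)

private lemma aux_integral_exp (b : ℝ) (hb : 0 < b) :
    (∫ t in Set.Ioi (0:ℝ), Real.exp (-(b * t))) = b⁻¹ := by
  have := integral_comp_mul_left_Ioi (fun x => Real.exp (-x)) 0 hb
  simp only [mul_zero] at this
  rw [show (∫ t in Set.Ioi (0:ℝ), Real.exp (-(b * t))) =
    ∫ t in Set.Ioi (0:ℝ), (fun x => Real.exp (-x)) (b * t) from rfl, this,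
    integral_exp_neg_Ioi, neg_zero, Real.exp_zero, smul_eq_mul, mul_one]

private lemma aux_limsup {F : ℝ → ℝ} {q Cs : ℝ} (hq : 0 < q) (hCs : 1 ≤ Cs)
    (hb : ∀ T : ℝ, 1 ≤ T → 0 ≤ F T ∧ F T ≤ Cs * T ^ q) :
    Filter.limsup
      (fun T : ℝ => ((Real.log (F T) / (q * Real.log T) : ℝ) : EReal)) Filter.atTop
      ≤ (1 : EReal) := by
  have h1 : ∀ᶠ T : ℝ in atTop,
      ((Real.log (F T) / (q * Real.log T) : ℝ) : EReal)
        ≤ ((1 + Real.log Cs / (q * Real.log T) : ℝ) : EReal) := by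
    filter_upwards [eventually_ge_atTop (2:ℝ)] with T hT
    have hT1 : (1:ℝ) < T := by linarith
    have hT0 : (0:ℝ) < T := by linarith
    have hlogT : 0 < Real.log T := Real.log_pos hT1
    have hql : 0 < q * Real.log T := by positivity
    obtain ⟨hF0, hFb⟩ := hb T (by linarith)
    have hrpow1 : (1:ℝ) ≤ T ^ q := by
      calc (1:ℝ) = 1 ^ q := (Real.one_rpow q).symm
        _ ≤ T ^ q := Real.rpow_le_rpow zero_le_one hT1.le hq.le
    have hlog : Real.log (F T) ≤ Real.log Cs + q * Real.log T := by
      have hrhs : Real.log (Cs * T ^ q) = Real.log Cs + q * Real.log T := by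
        rw [Real.log_mul (by linarith) (by positivity), Real.log_rpow hT0]
      rcases eq_or_lt_of_le hF0 with h0 | h0
      · rw [← h0, Real.log_zero, ← hrhs]
        apply Real.log_nonneg
        nlinarith
      · rw [← hrhs]
        exact Real.log_le_log h0 hFb
    rw [EReal.coe_le_coe_iff]
    rw [show (1 : ℝ) + Real.log Cs / (q * Real.log T)
        = (Real.log Cs + q * Real.log T) / (q * Real.log T) by
      rw [add_div, div_self hql.ne']; ring]
    exact div_le_div_of_nonneg_right (c := q * Real.log T) hlog hql.le
      |>.trans_eq rfl
  have h2 : Tendsto (fun T : ℝ => ((1 + Real.log Cs / (q * Real.log T) : ℝ) : EReal))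
      atTop (nhds (1 : EReal)) := by
    rw [show ((1 : EReal)) = ((1:ℝ) : EReal) by norm_num]
    rw [EReal.tendsto_coe]
    have hden : Tendsto (fun T : ℝ => q * Real.log T) atTop atTop :=
      (Real.tendsto_log_atTop).const_mul_atTop hq
    have : Tendsto (fun T : ℝ => Real.log Cs / (q * Real.log T)) atTop (nhds 0) :=
      Tendsto.div_atTop tendsto_const_nhds hden
    simpa using (tendsto_const_nhds (x := (1:ℝ)) (f := atTop)).add this
  calc Filter.limsup (fun T : ℝ => ((Real.log (F T) / (q * Real.log T) : ℝ) : EReal)) atTop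
      ≤ Filter.limsup (fun T : ℝ => ((1 + Real.log Cs / (q * Real.log T) : ℝ) : EReal)) atTop :=
        limsup_le_limsup h1
    _ = (1 : EReal) := h2.limsup_eq

private lemma aux_integral_bound {Sfun : ℝ → ℝ} {q lam M P C₁ : ℝ}
    (hq : 0 < q) (hlam : 0 < lam) (hM : 0 ≤ M) (hP : 0 ≤ P) (hC₁ : 0 ≤ C₁)
    (hS0 : ∀ t : ℝ, 0 ≤ Sfun t)
    (hS : ∀ t : ℝ, 0 < t → Sfun t ≤ (2 * M * t / lam + 1) ^ q * P + C₁)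
    (T : ℝ) (hT : 1 ≤ T) :
    (2 / T) * (∫ t in Set.Ioi (0:ℝ), Real.exp (-2 * t / T) * Sfun t) ≤
      (2 * (2 ^ (⌈q⌉₊) * (1 + (⌈q⌉₊).factorial)) * (2 * M / lam + 1) ^ q * P + 2 * C₁)
        * T ^ q := by
  have hT0 : (0:ℝ) < T := lt_of_lt_of_le one_pos hT
  set cN : ℝ := 2 ^ (⌈q⌉₊) * (1 + (⌈q⌉₊).factorial) with hcN
  have hcN0 : 0 ≤ cN := by positivity
  set D : ℝ := cN * (2 * M * T / lam + 1) ^ q * P + C₁ with hD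
  have hD0 : 0 ≤ D := by positivity
  -- pointwise bound
  have hpoint : ∀ t : ℝ, t ∈ Set.Ioi (0:ℝ) →
      Real.exp (-2 * t / T) * Sfun t ≤ Real.exp (-T⁻¹ * t) * D := by
    intro t ht
    have ht0 : 0 < t := ht
    have hx : 0 ≤ t / T := by positivity
    have hsplit : Real.exp (-2 * t / T) = Real.exp (-(t/T)) * Real.exp (-(t/T)) := by
      rw [← Real.exp_add]; congr 1; ring
    have hbase : 2 * M * t / lam + 1 ≤ (2 * M * T / lam + 1) * (1 + t / T) := by
      have hkey : (2 * M * T / lam) * (t / T) = 2 * M * t / lam := by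
        field_simp
      nlinarith [mul_nonneg (mul_nonneg (by norm_num : (0:ℝ) ≤ 2) hM) ht0.le,
        div_nonneg (mul_nonneg (mul_nonneg (by norm_num : (0:ℝ) ≤ 2) hM) hT0.le) hlam.le, hx]
    have hrpow : (2 * M * t / lam + 1) ^ q ≤ (2 * M * T / lam + 1) ^ q * (1 + t / T) ^ q := by
      have h1 : (2 * M * t / lam + 1) ^ q ≤ ((2 * M * T / lam + 1) * (1 + t / T)) ^ q :=
        Real.rpow_le_rpow (by positivity) hbase hq.le
      rwa [Real.mul_rpow (by positivity) (by positivity)] at h1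
    have hcNb : (1 + t / T) ^ q * Real.exp (-(t/T)) ≤ cN := aux_pow_exp_bound q hq (t/T) hx
    have hexp1 : Real.exp (-(t/T)) ≤ 1 := Real.exp_le_one_iff.mpr (by positivity |> neg_nonpos_of_nonneg)
    calc Real.exp (-2 * t / T) * Sfun t
        ≤ Real.exp (-(t/T)) * Real.exp (-(t/T)) * ((2 * M * t / lam + 1) ^ q * P + C₁) := by
          rw [hsplit]
          exact mul_le_mul_of_nonneg_left (hS t ht0) (by positivity)
      _ = Real.exp (-(t/T)) * ((2 * M * t / lam + 1) ^ q * Real.exp (-(t/T)) * P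
            + Real.exp (-(t/T)) * C₁) := by ring
      _ ≤ Real.exp (-(t/T)) * D := by
          apply mul_le_mul_of_nonneg_left _ (Real.exp_pos _).le
          rw [hD]
          have hA : (2 * M * t / lam + 1) ^ q * Real.exp (-(t/T))
              ≤ cN * (2 * M * T / lam + 1) ^ q := by
            calc (2 * M * t / lam + 1) ^ q * Real.exp (-(t/T))
                ≤ ((2 * M * T / lam + 1) ^ q * (1 + t / T) ^ q) * Real.exp (-(t/T)) :=
                  mul_le_mul_of_nonneg_right hrpow (Real.exp_pos _).le
              _ = (2 * M * T / lam + 1) ^ q * ((1 + t / T) ^ q * Real.exp (-(t/T))) := by ring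
              _ ≤ (2 * M * T / lam + 1) ^ q * cN :=
                  mul_le_mul_of_nonneg_left hcNb (by positivity)
              _ = cN * (2 * M * T / lam + 1) ^ q := by ring
          have hB : Real.exp (-(t/T)) * C₁ ≤ C₁ := by
            nlinarith [Real.exp_pos (-(t/T))]
          nlinarith [mul_le_mul_of_nonneg_right hA hP]
      _ = Real.exp (-T⁻¹ * t) * D := by
          congr 2
          field_simp
  -- integral bound
  have hint : Integrable (fun t : ℝ => Real.exp (-T⁻¹ * t) * D)
      (volume.restrict (Set.Ioi (0:ℝ))) := by
    exact (exp_neg_integrableOn_Ioi 0 (inv_pos.mpr hT0)).mul_const D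
  have hI : (∫ t in Set.Ioi (0:ℝ), Real.exp (-2 * t / T) * Sfun t) ≤
      ∫ t in Set.Ioi (0:ℝ), Real.exp (-T⁻¹ * t) * D := by
    apply integral_mono_of_nonneg
    · exact Filter.Eventually.of_forall fun t => mul_nonneg (Real.exp_pos _).le (hS0 t)
    · exact hint
    · exact (ae_restrict_mem measurableSet_Ioi).mono hpoint
  have hIval : (∫ t in Set.Ioi (0:ℝ), Real.exp (-T⁻¹ * t) * D) = T * D := by
    rw [integral_mul_const]
    simp only [neg_mul]
    rw [aux_integral_exp T⁻¹ (inv_pos.mpr hT0), inv_inv]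
  have hmom : (2 / T) * (∫ t in Set.Ioi (0:ℝ), Real.exp (-2 * t / T) * Sfun t) ≤ 2 * D := by
    have h2T : (0:ℝ) ≤ 2 / T := by positivity
    calc (2 / T) * (∫ t in Set.Ioi (0:ℝ), Real.exp (-2 * t / T) * Sfun t)
        ≤ (2 / T) * (T * D) := by
          apply mul_le_mul_of_nonneg_left (hI.trans_eq hIval) h2T
      _ = 2 * D := by field_simp
  refine hmom.trans ?_
  -- 2 * D ≤ Cs * T ^ q
  have hTq1 : (1:ℝ) ≤ T ^ q := by
    calc (1:ℝ) = 1 ^ q := (Real.one_rpow q).symm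
      _ ≤ T ^ q := Real.rpow_le_rpow zero_le_one hT hq.le
  have hsc : (2 * M * T / lam + 1) ^ q ≤ (2 * M / lam + 1) ^ q * T ^ q := by
    have hbase : 2 * M * T / lam + 1 ≤ (2 * M / lam + 1) * T := by
      have : 2 * M * T / lam = (2 * M / lam) * T := by ring
      nlinarith [div_nonneg (mul_nonneg (by norm_num : (0:ℝ) ≤ 2) hM) hlam.le]
    have h1 : (2 * M * T / lam + 1) ^ q ≤ ((2 * M / lam + 1) * T) ^ q :=
      Real.rpow_le_rpow (by positivity) hbase hq.le
    rwa [Real.mul_rpow (by positivity) hT0.le] at h1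
  rw [hD]
  have e1 : 2 * cN * ((2 * M * T / lam + 1) ^ q * P) ≤
      2 * cN * ((2 * M / lam + 1) ^ q * T ^ q * P) := by
    apply mul_le_mul_of_nonneg_left _ (by positivity)
    exact mul_le_mul_of_nonneg_right hsc hP
  have e2 : 2 * C₁ ≤ 2 * C₁ * T ^ q := by nlinarith
  calc 2 * (cN * (2 * M * T / lam + 1) ^ q * P + C₁)
      = 2 * cN * ((2 * M * T / lam + 1) ^ q * P) + 2 * C₁ := by ring
    _ ≤ 2 * cN * ((2 * M / lam + 1) ^ q * T ^ q * P) + 2 * C₁ * T ^ q := add_le_add e1 e2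
    _ = (2 * cN * (2 * M / lam + 1) ^ q * P + 2 * C₁) * T ^ q := by ring

set_option maxHeartbeats 1000000 in
/-- ballistic transport upper bound: for the long-range operator
`H = A + V` with exponentially decaying hopping and bounded real `V`, and any
finitely supported `φ`, the upper transport exponent satisfies `β⁺_φ(q) ≤ 1`
for every `q > 0`. -/
theorem stmt13 (a : ℤ → ℂ) (V : ℤ → ℝ) (H : L2 →L[ℂ] L2) (A₁ α Vbd : ℝ)
    (hA₁ : 0 < A₁) (hα : 0 < α) (hVbd : 0 ≤ Vbd)
    (ha : ∀ k : ℤ, ‖a k‖ ≤ A₁ * Real.exp (-α * |(k : ℝ)|))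
    (hsym : ∀ k : ℤ, a (-k) = starRingEnd ℂ (a k))
    (hV : ∀ n : ℤ, |V n| ≤ Vbd)
    (hH : IsLongRange a V H)
    (φ : L2) (hφ : ∃ K₁ : ℤ, ∀ n : ℤ, K₁ < |n| → φ n = 0) :
    ∀ q : ℝ, 0 < q → beta H φ q ≤ (1 : EReal) := by
  intro q hq
  obtain ⟨K₁, hK⟩ := hφ
  have hsa : IsSelfAdjoint H := aux_sa hA₁ hα ha hsym hH
  have hlam : 0 < α / 2 := by positivity
  have hSnn : 0 ≤ ∑' k : ℤ, Real.exp (-(α/2) * |(k : ℝ)|) :=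
    tsum_nonneg fun k => (Real.exp_pos _).le
  obtain ⟨C₀, hC₀0, hphi_dec⟩ : ∃ C₀ : ℝ, 0 ≤ C₀ ∧
      ∀ n : ℤ, ‖φ n‖ ≤ C₀ * Real.exp (-(α/2) * |(n : ℝ)|) := by
    refine ⟨‖φ‖ * Real.exp ((α/2) * ((max K₁ 0 : ℤ) : ℝ)),
      mul_nonneg (norm_nonneg _) (Real.exp_pos _).le, fun n => ?_⟩
    rcases le_or_gt |n| (max K₁ 0) with h | h
    · have h1 : ‖φ n‖ ≤ ‖φ‖ := lp.norm_apply_le_norm (by norm_num) φ n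
      have h2 : |(n:ℝ)| ≤ ((max K₁ 0 : ℤ) : ℝ) := by
        rw [← Int.cast_abs]; exact_mod_cast h
      have h3 : (1:ℝ) ≤ Real.exp ((α/2) * ((max K₁ 0 : ℤ) : ℝ))
          * Real.exp (-(α/2) * |(n:ℝ)|) := by
        rw [← Real.exp_add]
        rw [show (1:ℝ) = Real.exp 0 by simp]
        apply Real.exp_le_exp.mpr
        nlinarith [hlam.le, h2]
      calc ‖φ n‖ = ‖φ n‖ := rfl
        _ ≤ ‖φ‖ := h1
        _ = ‖φ‖ * 1 := by ring
        _ ≤ ‖φ‖ * (Real.exp ((α/2) * ((max K₁ 0 : ℤ) : ℝ))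
              * Real.exp (-(α/2) * |(n:ℝ)|)) :=
            mul_le_mul_of_nonneg_left h3 (norm_nonneg _)
        _ = ‖φ‖ * Real.exp ((α/2) * ((max K₁ 0 : ℤ) : ℝ))
              * Real.exp (-(α/2) * |(n:ℝ)|) := by ring
    · have h0 : φ n = 0 := hK n (lt_of_le_of_lt (le_max_left K₁ 0) h)
      rw [h0]
      rw [norm_zero]
      positivity
  obtain ⟨M, hM0, hpow⟩ : ∃ M : ℝ, 0 ≤ M ∧ ∀ (m : ℕ) (n : ℤ),
      ‖((H ^ m) φ) n‖ ≤ C₀ * M ^ m * Real.exp (-(α/2) * |(n : ℝ)|) := by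
    refine ⟨A₁ * (∑' k : ℤ, Real.exp (-(α/2) * |(k : ℝ)|)) + Vbd, by positivity, ?_⟩
    exact fun m n => aux_pow hA₁ hα hVbd ha hV hH φ C₀ hC₀0 hphi_dec m n
  have hCT : ∀ t : ℝ, 0 ≤ t → ∀ n : ℤ,
      ‖(U H t φ) n‖ ≤ C₀ * Real.exp (M * t) * Real.exp (-(α/2) * |(n : ℝ)|) :=
    fun t ht n => aux_CT hC₀0 hM0 hlam hpow t ht n
  obtain ⟨C₁, hC₁0, hSb⟩ : ∃ C₁ : ℝ, 0 ≤ C₁ ∧ ∀ t : ℝ, 0 < t →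
      (∑' n : ℤ, |(n : ℝ)| ^ q * ‖⟪U H t φ, dl n⟫_ℂ‖ ^ 2)
        ≤ (2 * M * t / (α/2) + 1) ^ q * ‖φ‖ ^ 2 + C₁ := by
    refine ⟨C₀ ^ 2 * ∑' n : ℤ, |(n:ℝ)| ^ q * Real.exp (-(α/2) * |(n:ℝ)|),
      mul_nonneg (by positivity) (tsum_nonneg fun n => by positivity), fun t ht => ?_⟩
    have hmain := aux_sum_bound hq hlam hC₀0 hM0 (U H t φ) t ht.le (hCT t ht.le)
    rw [aux_unitary hsa t φ] at hmain
    calc (∑' n : ℤ, |(n : ℝ)| ^ q * ‖⟪U H t φ, dl n⟫_ℂ‖ ^ 2)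
        = ∑' n : ℤ, |(n : ℝ)| ^ q * ‖(U H t φ) n‖ ^ 2 :=
          tsum_congr fun n => by rw [aux_inner_dl]
      _ ≤ _ := hmain
  have hmn : ∀ T : ℝ, 1 ≤ T → 0 ≤ moment H φ q T := by
    intro T hT
    unfold moment
    apply mul_nonneg (by positivity)
    apply MeasureTheory.integral_nonneg
    intro t
    exact mul_nonneg (Real.exp_pos _).le (tsum_nonneg fun n => by positivity)
  have hmom : ∀ T : ℝ, 1 ≤ T → moment H φ q T ≤
      (2 * (2 ^ (⌈q⌉₊) * (1 + (⌈q⌉₊).factorial)) * (2 * M / (α/2) + 1) ^ q * ‖φ‖ ^ 2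
        + 2 * C₁) * T ^ q := by
    intro T hT
    have h0 : ∀ t : ℝ, 0 ≤ ∑' n : ℤ, |(n : ℝ)| ^ q * ‖⟪U H t φ, dl n⟫_ℂ‖ ^ 2 :=
      fun t => tsum_nonneg fun n => by positivity
    unfold moment
    exact aux_integral_bound hq hlam hM0 (by positivity) hC₁0 h0 hSb T hT
  unfold beta
  apply aux_limsup hq (le_max_right _ 1)
  intro T hT
  refine ⟨hmn T hT, (hmom T hT).trans ?_⟩
  apply mul_le_mul_of_nonneg_right (le_max_left _ _)
  exact Real.rpow_nonneg (by linarith) q
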